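/- Let $\rho$ and $\mu$ be compactly supported Borel probability measures on $\mathbb{R}$, with $\inf_{E\in\mathbb{R}} \int \log_-|E - E'|\,d\rho(E') > -\infty$. Define $\gamma_\rho(z) = \int \log|z - E|\, d\rho(E)$ for $z \in \mathbb{C}$. Then for any $\epsilon \in (0,1]$ and any $\xi > 0$, $\mu\{E \in \mathbb{R} : |\gamma_\rho(E + i\epsilon) - \gamma_\rho(E)| \ge \xi\} \le \frac{1}{2\xi} \sup_{E'\in\mathbb{R}} \int_{\mathbb{R}} \log\Big(1 + \frac{\epsilon^2}{(E-E')^2}\Big)\, d\mu(E)$. -/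

import Mathlib

open MeasureTheory Set
open scoped ENNReal

private lemma neg_log_le_rpow {s : ℝ} (hs : 0 < s) : -Real.log s ≤ 2 * s ^ (-(2:ℝ)⁻¹) := by
  have hu : 0 < s ^ (-(2:ℝ)⁻¹) := Real.rpow_pos_of_pos hs _
  have h1 := Real.log_le_sub_one_of_pos hu
  rw [Real.log_rpow hs] at h1
  linarith

private lemma rpow_neg_base_eq_zero {x : ℝ} (hx : x < 0) : x ^ (-(2:ℝ)⁻¹) = 0 := by
  rw [Real.rpow_def_of_neg hx,
    show (-(2:ℝ)⁻¹ * Real.pi) = -(Real.pi / 2) by ring, Real.cos_neg, Real.cos_pi_div_two,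
    mul_zero]

private lemma logMinIntegrable : Integrable (fun t : ℝ => min (Real.log |t|) 0) (volume : Measure ℝ) := by
  have hmeas : Measurable (fun t : ℝ => min (Real.log |t|) 0) :=
    (Real.measurable_log.comp measurable_abs).min measurable_const
  have hzero : ∀ t : ℝ, t ∉ Ioo (-1:ℝ) 1 → min (Real.log |t|) 0 = 0 := by
    intro t ht
    have h1 : (1:ℝ) ≤ |t| := by
      by_contra h
      push_neg at h
      exact ht ⟨by cases abs_lt.mp h with | intro h1 h2 => linarith,
        by cases abs_lt.mp h with | intro h1 h2 => linarith⟩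
    exact min_eq_right (Real.log_nonneg h1)
  have heq : (fun t : ℝ => min (Real.log |t|) 0)
      = (Ioo (-1:ℝ) 1).indicator (fun t => min (Real.log |t|) 0) := by
    funext t
    by_cases ht : t ∈ Ioo (-1:ℝ) 1
    · rw [Set.indicator_of_mem ht]
    · rw [Set.indicator_of_notMem ht, hzero t ht]
  rw [heq, integrable_indicator_iff measurableSet_Ioo]
  have h1 : IntervalIntegrable (fun t : ℝ => t ^ (-(2:ℝ)⁻¹)) volume (-1) 1 :=
    intervalIntegral.intervalIntegrable_rpow' (by norm_num)
  have h2 : IntervalIntegrable (fun t : ℝ => (-t) ^ (-(2:ℝ)⁻¹)) volume (-1) 1 := by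
    have := (intervalIntegral.intervalIntegrable_rpow' (a := -1) (b := 1) (r := -(2:ℝ)⁻¹) (by norm_num))
    have h := (IntervalIntegrable.iff_comp_neg).mp this
    simpa using h.symm
  have hdom : IntegrableOn (fun t : ℝ => 2 * (t ^ (-(2:ℝ)⁻¹) + (-t) ^ (-(2:ℝ)⁻¹)))
      (Ioo (-1:ℝ) 1) volume := by
    have h3 := (h1.add h2).const_mul 2
    rwa [intervalIntegrable_iff_integrableOn_Ioo_of_le (by norm_num : (-1:ℝ) ≤ 1)] at h3
  refine Integrable.mono' hdom hmeas.aestronglyMeasurable ?_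
  filter_upwards [ae_restrict_mem measurableSet_Ioo] with t ht
  have hnorm : ‖min (Real.log |t|) 0‖ = -(min (Real.log |t|) 0) := by
    rw [Real.norm_eq_abs, abs_of_nonpos (min_le_right _ _)]
  rw [hnorm]
  rcases lt_trichotomy t 0 with hlt | heq0 | hgt
  · have habs : |t| = -t := abs_of_neg hlt
    have hpos : 0 < -t := by linarith
    have hb : -Real.log (-t) ≤ 2 * (-t) ^ (-(2:ℝ)⁻¹) := neg_log_le_rpow hpos
    have ht0 : t ^ (-(2:ℝ)⁻¹) = 0 := rpow_neg_base_eq_zero hlt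
    have : -(min (Real.log |t|) 0) ≤ -Real.log (-t) ∨ -(min (Real.log |t|) 0) = 0 := by
      rcases le_or_gt 0 (Real.log |t|) with h | h
      · right; rw [min_eq_right h]; ring
      · left; rw [min_eq_left h.le, habs]
    rcases this with h | h
    · have hr : 0 ≤ (-t) ^ (-(2:ℝ)⁻¹) := Real.rpow_nonneg hpos.le _
      calc -(min (Real.log |t|) 0) ≤ -Real.log (-t) := h
        _ ≤ 2 * (-t) ^ (-(2:ℝ)⁻¹) := hb
        _ ≤ 2 * (t ^ (-(2:ℝ)⁻¹) + (-t) ^ (-(2:ℝ)⁻¹)) := by rw [ht0]; linarith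
    · rw [h]
      have hr : 0 ≤ (-t) ^ (-(2:ℝ)⁻¹) := Real.rpow_nonneg hpos.le _
      rw [ht0]; linarith
  · subst heq0
    simp [Real.log_zero, Real.zero_rpow (by norm_num : -(2:ℝ)⁻¹ ≠ 0)]
  · have habs : |t| = t := abs_of_pos hgt
    have hb : -Real.log t ≤ 2 * t ^ (-(2:ℝ)⁻¹) := neg_log_le_rpow hgt
    have ht0 : (-t) ^ (-(2:ℝ)⁻¹) = 0 := rpow_neg_base_eq_zero (by linarith)
    have hr : 0 ≤ t ^ (-(2:ℝ)⁻¹) := Real.rpow_nonneg hgt.le _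
    rcases le_or_gt 0 (Real.log |t|) with h | h
    · rw [min_eq_right h]
      rw [ht0]; simp; positivity
    · rw [min_eq_left h.le, habs]
      rw [ht0]; linarith

private lemma ofReal_neg_min_eq (l : ℝ) :
    ENNReal.ofReal (-(min l 0)) = (‖min l 0‖₊ : ℝ≥0∞) := by
  rw [← enorm_eq_nnnorm, ← ofReal_norm_eq_enorm, Real.norm_eq_abs, abs_of_nonpos (min_le_right l 0)]

private lemma atomless_of_hlog (ρ : Measure ℝ) [IsProbabilityMeasure ρ]
    (hlog : ∃ m : ℝ, ∀ E : ℝ, m ≤ ∫ E', min (Real.log |E - E'|) 0 ∂ρ) (p : ℝ) :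
    ρ {p} = 0 := by
  by_contra h0
  obtain ⟨m, hm⟩ := hlog
  set a := (ρ {p}).toReal with ha_def
  have ha : 0 < a := ENNReal.toReal_pos h0 (measure_ne_top ρ _)
  set m' := min m (-1) with hm'_def
  have hm'm : m' ≤ m := min_le_left _ _
  have hm'neg : m' < 0 := lt_of_le_of_lt (min_le_right _ _) (by norm_num)
  set δ := Real.exp (m' / a - 1) with hδ_def
  have hδ : 0 < δ := Real.exp_pos _
  have hδ1 : δ < 1 := by
    rw [hδ_def]
    apply Real.exp_lt_one_iff.mpr
    have : m' / a < 0 := div_neg_of_neg_of_pos hm'neg ha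
    linarith
  have hFmeas : Measurable (fun q : ℝ × ℝ =>
      ENNReal.ofReal (-(min (Real.log |q.1 - q.2|) 0))) :=
    ENNReal.measurable_ofReal.comp
      (((Real.measurable_log.comp (measurable_fst.sub measurable_snd).abs).min
        measurable_const).neg)
  have hC : (∫⁻ t, ENNReal.ofReal (-(min (Real.log |t|) 0)) ∂(volume : Measure ℝ)) < ⊤ := by
    have h := logMinIntegrable.hasFiniteIntegral
    rw [hasFiniteIntegral_iff_norm] at h
    calc (∫⁻ t, ENNReal.ofReal (-(min (Real.log |t|) 0)) ∂(volume : Measure ℝ))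
        = ∫⁻ t, ENNReal.ofReal ‖min (Real.log |t|) 0‖ ∂(volume : Measure ℝ) :=
          lintegral_congr fun t => by
            rw [Real.norm_eq_abs, abs_of_nonpos (min_le_right (Real.log |t|) 0)]
      _ < ⊤ := h
  have key : (∫⁻ E in Ioo p (p + δ),
      ∫⁻ x, ENNReal.ofReal (-(min (Real.log |E - x|) 0)) ∂ρ ∂(volume : Measure ℝ)) < ⊤ := by
    have hswap := lintegral_lintegral_swap (μ := (volume : Measure ℝ).restrict (Ioo p (p + δ)))
      (ν := ρ) (f := fun E x => ENNReal.ofReal (-(min (Real.log |E - x|) 0)))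
      hFmeas.aemeasurable
    rw [hswap]
    calc (∫⁻ x, ∫⁻ E in Ioo p (p + δ),
          ENNReal.ofReal (-(min (Real.log |E - x|) 0)) ∂(volume : Measure ℝ) ∂ρ)
        ≤ ∫⁻ _x, (∫⁻ t, ENNReal.ofReal (-(min (Real.log |t|) 0)) ∂(volume : Measure ℝ)) ∂ρ := by
          refine lintegral_mono fun x => ?_
          refine le_trans (setLIntegral_le_lintegral _ _) (le_of_eq ?_)
          have := lintegral_sub_right_eq_self (μ := (volume : Measure ℝ))
            (fun t => ENNReal.ofReal (-(min (Real.log |t|) 0))) x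
          simpa using this
      _ < ⊤ := by
          rw [lintegral_const, measure_univ, mul_one]; exact hC
  have hgmeas : Measurable (fun E : ℝ =>
      ∫⁻ x, ENNReal.ofReal (-(min (Real.log |E - x|) 0)) ∂ρ) :=
    hFmeas.lintegral_prod_right'
  have hae : ∀ᵐ E ∂((volume : Measure ℝ).restrict (Ioo p (p + δ))),
      (∫⁻ x, ENNReal.ofReal (-(min (Real.log |E - x|) 0)) ∂ρ) < ⊤ :=
    ae_lt_top hgmeas key.ne
  obtain ⟨E, hEIoo, hEfin⟩ : ∃ E, E ∈ Ioo p (p + δ) ∧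
      (∫⁻ x, ENNReal.ofReal (-(min (Real.log |E - x|) 0)) ∂ρ) < ⊤ := by
    by_contra hcon
    push_neg at hcon
    rw [ae_restrict_iff' measurableSet_Ioo] at hae
    have hae2 : ∀ᵐ E ∂(volume : Measure ℝ), E ∉ Ioo p (p + δ) := by
      filter_upwards [hae] with E hE hmem
      exact absurd (hE hmem) (not_lt_of_ge (hcon E hmem))
    have h2 := ae_iff.mp hae2
    rw [show {a : ℝ | ¬ a ∉ Ioo p (p + δ)} = Ioo p (p + δ) by ext x; simp] at h2
    rw [Real.volume_Ioo, ENNReal.ofReal_eq_zero] at h2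
    linarith
  have hintmeas : Measurable (fun x : ℝ => min (Real.log |E - x|) 0) :=
    (Real.measurable_log.comp (measurable_const.sub measurable_id).abs).min measurable_const
  have hint : Integrable (fun x : ℝ => min (Real.log |E - x|) 0) ρ := by
    refine ⟨hintmeas.aestronglyMeasurable, ?_⟩
    rw [hasFiniteIntegral_iff_norm]
    calc (∫⁻ x, ENNReal.ofReal ‖min (Real.log |E - x|) 0‖ ∂ρ)
        = ∫⁻ x, ENNReal.ofReal (-(min (Real.log |E - x|) 0)) ∂ρ :=
          lintegral_congr fun x => by
            rw [Real.norm_eq_abs, abs_of_nonpos (min_le_right (Real.log |E - x|) 0)]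
      _ < ⊤ := hEfin
  have hEp : 0 < E - p := by linarith [hEIoo.1]
  have hEpδ : E - p < δ := by linarith [hEIoo.2]
  have habs : |E - p| = E - p := abs_of_pos hEp
  have hlogneg : Real.log |E - p| < 0 := by
    rw [habs]
    exact Real.log_neg hEp (by linarith)
  have hsplit : ∫ x, min (Real.log |E - x|) 0 ∂ρ ≤ a * Real.log |E - p| := by
    have h1 : (∫ x in ({p} : Set ℝ), min (Real.log |E - x|) 0 ∂ρ)
        + (∫ x in ({p} : Set ℝ)ᶜ, min (Real.log |E - x|) 0 ∂ρ)
        = ∫ x, min (Real.log |E - x|) 0 ∂ρ :=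
      integral_add_compl (measurableSet_singleton p) hint
    have h2 : (∫ x in ({p} : Set ℝ), min (Real.log |E - x|) 0 ∂ρ)
        = a * min (Real.log |E - p|) 0 := by
      rw [integral_singleton]; simp [ha_def, smul_eq_mul, measureReal_def]
    have h3 : (∫ x in ({p} : Set ℝ)ᶜ, min (Real.log |E - x|) 0 ∂ρ) ≤ 0 :=
      integral_nonpos fun x => min_le_right _ _
    have h4 : min (Real.log |E - p|) 0 = Real.log |E - p| := min_eq_left hlogneg.le
    rw [← h1, h2, h4]
    linarith
  have hloglt : Real.log |E - p| < m' / a - 1 := by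
    rw [habs]
    calc Real.log (E - p) < Real.log δ := Real.log_lt_log hEp hEpδ
      _ = m' / a - 1 := by rw [hδ_def, Real.log_exp]
  have hfin : a * Real.log |E - p| < m' := by
    have h5 : a * Real.log |E - p| < a * (m' / a - 1) :=
      mul_lt_mul_of_pos_left hloglt ha
    have h6 : a * (m' / a - 1) = m' - a := by field_simp
    linarith
  have := hm E
  linarith

private lemma neg_logmin_le {ε t : ℝ} (hε0 : 0 < ε) (hε1 : ε ≤ 1) :
    -(min (Real.log |t|) 0) ≤ Real.log (1 + ε ^ 2 / t ^ 2) + -(2 * Real.log ε) := by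
  have hεlog : Real.log ε ≤ 0 := Real.log_nonpos hε0.le hε1
  rcases eq_or_ne t 0 with rfl | ht
  · simp [Real.log_zero]
    linarith
  · have ht2 : 0 < t ^ 2 := by positivity
    have hfrac : 0 < ε ^ 2 / t ^ 2 := by positivity
    have hlog1 : 0 ≤ Real.log (1 + ε ^ 2 / t ^ 2) := Real.log_nonneg (by linarith)
    rcases le_or_gt 0 (Real.log |t|) with h | h
    · rw [min_eq_right h]
      linarith
    · rw [min_eq_left h.le]
      have key : Real.log (ε ^ 2 / t ^ 2) ≤ Real.log (1 + ε ^ 2 / t ^ 2) :=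
        Real.log_le_log hfrac (by linarith)
      rw [Real.log_div (by positivity) ht2.ne'] at key
      have h2 : Real.log (ε ^ 2) = 2 * Real.log ε := by
        rw [Real.log_pow]; push_cast; ring
      have h3 : Real.log (t ^ 2) = 2 * Real.log |t| := by
        rw [Real.log_pow, Real.log_abs]; push_cast; ring
      rw [h2, h3] at key
      linarith

/-- For compactly supported probability measures `ρ, μ` on `ℝ`, with
`inf_E ∫ log₋|E - E'| dρ(E') > -∞` and `γ_ρ(z) = ∫ log|z - E| dρ(E)`, one has for any
`ε ∈ (0,1]` and `ξ > 0`: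
`μ{E : |γ_ρ(E+iε) - γ_ρ(E)| ≥ ξ} ≤ (2ξ)⁻¹ sup_{E'} ∫ log(1 + ε²/(E-E')²) dμ(E)`. -/
theorem measure_lyapunov_diff_ge_le (ρ μ : Measure ℝ)
    [IsProbabilityMeasure ρ] [IsProbabilityMeasure μ]
    (hρc : ∃ K : Set ℝ, IsCompact K ∧ ρ Kᶜ = 0)
    (hμc : ∃ K : Set ℝ, IsCompact K ∧ μ Kᶜ = 0)
    (hlog : ∃ m : ℝ, ∀ E : ℝ, m ≤ ∫ E', min (Real.log |E - E'|) 0 ∂ρ)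
    (ε ξ : ℝ) (hε0 : 0 < ε) (hε1 : ε ≤ 1) (hξ : 0 < ξ) :
    μ {E : ℝ | ξ ≤ |(∫ x, Real.log ‖(E : ℂ) + ε * Complex.I - (x : ℂ)‖ ∂ρ)
                    - ∫ x, Real.log |E - x| ∂ρ|}
      ≤ ENNReal.ofReal (1 / (2 * ξ)) *
          ⨆ E' : ℝ, ∫⁻ E, ENNReal.ofReal (Real.log (1 + ε ^ 2 / (E - E') ^ 2)) ∂μ := by
  obtain ⟨Kρ, hKc, hKρ⟩ := hρc
  obtain ⟨R0, hR0⟩ := (isBounded_iff_forall_norm_le).mp hKc.isBounded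
  set R := max R0 0 with hR_def
  have hR : ∀ x ∈ Kρ, |x| ≤ R := fun x hx => le_trans (hR0 x hx) (le_max_left _ _)
  have hRnn : (0:ℝ) ≤ R := le_max_right _ _
  have hKae : ∀ᵐ x ∂ρ, x ∈ Kρ := by
    rw [ae_iff]
    rw [show {x : ℝ | ¬ x ∈ Kρ} = Kρᶜ from rfl]
    exact hKρ
  have hatom := atomless_of_hlog ρ hlog
  have hfmeas : Measurable (fun q : ℝ × ℝ =>
      ENNReal.ofReal (Real.log (1 + ε ^ 2 / (q.1 - q.2) ^ 2))) :=
    ENNReal.measurable_ofReal.comp (Real.measurable_log.comp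
      (measurable_const.add
        (measurable_const.div ((measurable_fst.sub measurable_snd).pow_const 2))))
  have hgmeas : Measurable (fun E : ℝ =>
      ∫⁻ x, ENNReal.ofReal (Real.log (1 + ε ^ 2 / (E - x) ^ 2)) ∂ρ) :=
    hfmeas.lintegral_prod_right'
  have hf0 : ∀ E x : ℝ, 0 ≤ Real.log (1 + ε ^ 2 / (E - x) ^ 2) := fun E x =>
    Real.log_nonneg (le_add_of_nonneg_right (div_nonneg (by positivity) (by positivity)))
  have key : {E : ℝ | ξ ≤ |(∫ x, Real.log ‖(E : ℂ) + ε * Complex.I - (x : ℂ)‖ ∂ρ)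
      - ∫ x, Real.log |E - x| ∂ρ|}
      ⊆ {E : ℝ | ENNReal.ofReal (2 * ξ)
          ≤ ∫⁻ x, ENNReal.ofReal (Real.log (1 + ε ^ 2 / (E - x) ^ 2)) ∂ρ} := by
    intro E hE
    simp only [mem_setOf_eq] at hE ⊢
    by_cases hint : Integrable (fun x : ℝ => min (Real.log |E - x|) 0) ρ
    · -- good case
      have hBig1 : (1:ℝ) ≤ (|E| + R) ^ 2 + 1 := by nlinarith [sq_nonneg (|E| + R)]
      have haxK : ∀ x ∈ Kρ, |E - x| ≤ |E| + R := by
        intro x hx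
        calc |E - x| ≤ |E| + |x| := abs_sub E x
          _ ≤ |E| + R := by linarith [hR x hx]
      have hI1 : Integrable (fun x : ℝ => Real.log ((E - x) ^ 2 + ε ^ 2)) ρ := by
        have hcont : Continuous (fun x : ℝ => Real.log ((E - x) ^ 2 + ε ^ 2)) := by
          apply Continuous.log
          · exact ((continuous_const.sub continuous_id).pow 2).add continuous_const
          · intro x; positivity
        refine ⟨hcont.aestronglyMeasurable, HasFiniteIntegral.of_bounded
          (C := |Real.log (ε ^ 2)| + |Real.log ((|E| + R) ^ 2 + 1)|) ?_⟩
        filter_upwards [hKae] with x hx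
        have h1 : ε ^ 2 ≤ (E - x) ^ 2 + ε ^ 2 := by nlinarith [sq_nonneg (E - x)]
        have h2 : (E - x) ^ 2 + ε ^ 2 ≤ (|E| + R) ^ 2 + 1 := by
          have hax := haxK x hx
          nlinarith [sq_abs (E - x), abs_nonneg (E - x)]
        have hl1 : Real.log (ε ^ 2) ≤ Real.log ((E - x) ^ 2 + ε ^ 2) :=
          Real.log_le_log (by positivity) h1
        have hl2 : Real.log ((E - x) ^ 2 + ε ^ 2) ≤ Real.log ((|E| + R) ^ 2 + 1) :=
          Real.log_le_log (by positivity) h2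
        rw [Real.norm_eq_abs, abs_le]
        constructor
        · have := neg_abs_le (Real.log (ε ^ 2))
          linarith [abs_nonneg (Real.log ((|E| + R) ^ 2 + 1))]
        · have := le_abs_self (Real.log ((|E| + R) ^ 2 + 1))
          linarith [abs_nonneg (Real.log (ε ^ 2))]
      have hI2max : Integrable (fun x : ℝ => max (Real.log |E - x|) 0) ρ := by
        have hmeas : Measurable (fun x : ℝ => max (Real.log |E - x|) 0) :=
          (Real.measurable_log.comp (measurable_const.sub measurable_id).abs).max
            measurable_const
        refine ⟨hmeas.aestronglyMeasurable, HasFiniteIntegral.of_bounded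
          (C := |Real.log ((|E| + R) ^ 2 + 1)|) ?_⟩
        filter_upwards [hKae] with x hx
        have hle : Real.log |E - x| ≤ Real.log ((|E| + R) ^ 2 + 1) := by
          rcases eq_or_ne (E - x) 0 with h | h
          · rw [h, abs_zero, Real.log_zero]
            exact Real.log_nonneg hBig1
          · apply Real.log_le_log (abs_pos.mpr h)
            have hax := haxK x hx
            nlinarith [abs_nonneg (E - x)]
        rw [Real.norm_eq_abs, abs_of_nonneg (le_max_right (Real.log |E - x|) 0)]
        exact max_le (hle.trans (le_abs_self _)) (abs_nonneg _)
      have hI2 : Integrable (fun x : ℝ => Real.log |E - x|) ρ := by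
        refine (hI2max.add hint).congr (ae_of_all _ fun x => ?_)
        exact max_add_min (Real.log |E - x|) 0 |>.trans (add_zero _)
      have hrw1 : (∫ x, Real.log ‖(E : ℂ) + ε * Complex.I - (x : ℂ)‖ ∂ρ)
          = ∫ x, Real.log ((E - x) ^ 2 + ε ^ 2) / 2 ∂ρ := by
        refine integral_congr_ae (ae_of_all _ fun x => ?_)
        have hre : ((E : ℂ) + ε * Complex.I - (x : ℂ)).re = E - x := by simp
        have him : ((E : ℂ) + ε * Complex.I - (x : ℂ)).im = ε := by simp
        have habs : ‖(E : ℂ) + ε * Complex.I - (x : ℂ)‖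
            = Real.sqrt ((E - x) ^ 2 + ε ^ 2) := by
          rw [Complex.norm_def, Complex.normSq_apply, hre, him]
          congr 1
          ring
        show Real.log ‖(E : ℂ) + ε * Complex.I - (x : ℂ)‖
            = Real.log ((E - x) ^ 2 + ε ^ 2) / 2
        rw [habs, Real.log_sqrt (by positivity)]
      have haeE : ∀ᵐ x ∂ρ, x ≠ E := by
        rw [ae_iff]
        rw [show {x : ℝ | ¬ x ≠ E} = {E} by ext x; simp]
        exact hatom E
      have haeId : (fun x : ℝ => Real.log ((E - x) ^ 2 + ε ^ 2) / 2 - Real.log |E - x|)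
          =ᵐ[ρ] (fun x : ℝ => Real.log (1 + ε ^ 2 / (E - x) ^ 2) / 2) := by
        filter_upwards [haeE] with x hx
        have ht : E - x ≠ 0 := sub_ne_zero.mpr (Ne.symm hx)
        have ht2 : (0:ℝ) < (E - x) ^ 2 := by positivity
        have h1 : Real.log |E - x| = Real.log ((E - x) ^ 2) / 2 := by
          rw [Real.log_pow, Real.log_abs]
          push_cast
          ring
        have h2 : Real.log (1 + ε ^ 2 / (E - x) ^ 2)
            = Real.log ((E - x) ^ 2 + ε ^ 2) - Real.log ((E - x) ^ 2) := by
          rw [show (1 + ε ^ 2 / (E - x) ^ 2) = ((E - x) ^ 2 + ε ^ 2) / (E - x) ^ 2 by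
            field_simp]
          rw [Real.log_div (by positivity) ht2.ne']
        rw [h1, h2]
        ring
      have hI3 : Integrable (fun x : ℝ => Real.log (1 + ε ^ 2 / (E - x) ^ 2)) ρ := by
        have h := ((hI1.div_const 2).sub hI2).const_mul 2
        refine h.congr ?_
        filter_upwards [haeId] with x hx
        simp only [Pi.sub_apply]
        linarith [hx]
      have hdiff : (∫ x, Real.log ‖(E : ℂ) + ε * Complex.I - (x : ℂ)‖ ∂ρ)
          - (∫ x, Real.log |E - x| ∂ρ)
          = (∫ x, Real.log (1 + ε ^ 2 / (E - x) ^ 2) ∂ρ) / 2 := by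
        rw [hrw1, ← integral_sub (hI1.div_const 2) hI2]
        rw [integral_congr_ae haeId]
        rw [integral_div]
      have hD0 : 0 ≤ ∫ x, Real.log (1 + ε ^ 2 / (E - x) ^ 2) ∂ρ :=
        integral_nonneg fun x => hf0 E x
      rw [hdiff] at hE
      rw [abs_of_nonneg (by linarith)] at hE
      have h2ξ : 2 * ξ ≤ ∫ x, Real.log (1 + ε ^ 2 / (E - x) ^ 2) ∂ρ := by linarith
      calc ENNReal.ofReal (2 * ξ)
          ≤ ENNReal.ofReal (∫ x, Real.log (1 + ε ^ 2 / (E - x) ^ 2) ∂ρ) :=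
            ENNReal.ofReal_le_ofReal h2ξ
        _ = ∫⁻ x, ENNReal.ofReal (Real.log (1 + ε ^ 2 / (E - x) ^ 2)) ∂ρ :=
            ofReal_integral_eq_lintegral_ofReal hI3 (ae_of_all _ fun x => hf0 E x)
    · -- bad case: the lintegral is infinite
      have hmeasmin : Measurable (fun x : ℝ => min (Real.log |E - x|) 0) :=
        (Real.measurable_log.comp (measurable_const.sub measurable_id).abs).min
          measurable_const
      have hlinf : (∫⁻ x, ENNReal.ofReal (-(min (Real.log |E - x|) 0)) ∂ρ) = ⊤ := by
        by_contra hne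
        refine hint ⟨hmeasmin.aestronglyMeasurable, ?_⟩
        rw [hasFiniteIntegral_iff_norm]
        calc (∫⁻ x, ENNReal.ofReal ‖min (Real.log |E - x|) 0‖ ∂ρ)
            = ∫⁻ x, ENNReal.ofReal (-(min (Real.log |E - x|) 0)) ∂ρ :=
              lintegral_congr fun x => by
                rw [Real.norm_eq_abs, abs_of_nonpos (min_le_right (Real.log |E - x|) 0)]
          _ < ⊤ := lt_top_iff_ne_top.mpr hne
      have hεlog : Real.log ε ≤ 0 := Real.log_nonpos hε0.le hε1
      have hpt : ∀ x : ℝ, ENNReal.ofReal (-(min (Real.log |E - x|) 0))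
          ≤ ENNReal.ofReal (Real.log (1 + ε ^ 2 / (E - x) ^ 2))
            + ENNReal.ofReal (-(2 * Real.log ε)) := by
        intro x
        rw [← ENNReal.ofReal_add (hf0 E x) (by linarith)]
        exact ENNReal.ofReal_le_ofReal (neg_logmin_le hε0 hε1)
      have htotal : (⊤ : ℝ≥0∞) ≤ (∫⁻ x, ENNReal.ofReal (Real.log (1 + ε ^ 2 / (E - x) ^ 2)) ∂ρ)
          + ENNReal.ofReal (-(2 * Real.log ε)) := by
        calc (⊤ : ℝ≥0∞) = ∫⁻ x, ENNReal.ofReal (-(min (Real.log |E - x|) 0)) ∂ρ := hlinf.symm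
          _ ≤ ∫⁻ x, (ENNReal.ofReal (Real.log (1 + ε ^ 2 / (E - x) ^ 2))
              + ENNReal.ofReal (-(2 * Real.log ε))) ∂ρ := lintegral_mono hpt
          _ = (∫⁻ x, ENNReal.ofReal (Real.log (1 + ε ^ 2 / (E - x) ^ 2)) ∂ρ)
              + ENNReal.ofReal (-(2 * Real.log ε)) := by
            rw [lintegral_add_right _ measurable_const, lintegral_const, measure_univ, mul_one]
      have htop : (∫⁻ x, ENNReal.ofReal (Real.log (1 + ε ^ 2 / (E - x) ^ 2)) ∂ρ) = ⊤ := by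
        by_contra hne
        have : (∫⁻ x, ENNReal.ofReal (Real.log (1 + ε ^ 2 / (E - x) ^ 2)) ∂ρ)
            + ENNReal.ofReal (-(2 * Real.log ε)) < ⊤ :=
          ENNReal.add_lt_top.mpr ⟨lt_top_iff_ne_top.mpr hne, ENNReal.ofReal_lt_top⟩
        exact absurd htotal (not_le.mpr this)
      rw [htop]
      exact le_top
  have tonelli : (∫⁻ E, ∫⁻ x, ENNReal.ofReal (Real.log (1 + ε ^ 2 / (E - x) ^ 2)) ∂ρ ∂μ)
      ≤ ⨆ E' : ℝ, ∫⁻ E, ENNReal.ofReal (Real.log (1 + ε ^ 2 / (E - E') ^ 2)) ∂μ := by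
    have hswap := lintegral_lintegral_swap (μ := μ) (ν := ρ)
      (f := fun E x => ENNReal.ofReal (Real.log (1 + ε ^ 2 / (E - x) ^ 2)))
      hfmeas.aemeasurable
    rw [hswap]
    calc (∫⁻ x, ∫⁻ E, ENNReal.ofReal (Real.log (1 + ε ^ 2 / (E - x) ^ 2)) ∂μ ∂ρ)
        ≤ ∫⁻ _x, (⨆ E' : ℝ, ∫⁻ E, ENNReal.ofReal (Real.log (1 + ε ^ 2 / (E - E') ^ 2)) ∂μ) ∂ρ :=
          lintegral_mono fun x =>
            le_iSup (fun E' : ℝ => ∫⁻ E, ENNReal.ofReal (Real.log (1 + ε ^ 2 / (E - E') ^ 2)) ∂μ) x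
      _ = ⨆ E' : ℝ, ∫⁻ E, ENNReal.ofReal (Real.log (1 + ε ^ 2 / (E - E') ^ 2)) ∂μ := by
          rw [lintegral_const, measure_univ, mul_one]
  have hc0 : ENNReal.ofReal (2 * ξ) ≠ 0 :=
    (ENNReal.ofReal_pos.mpr (by linarith)).ne'
  have hct : ENNReal.ofReal (2 * ξ) ≠ ⊤ := ENNReal.ofReal_ne_top
  have cheb := mul_meas_ge_le_lintegral₀ (μ := μ) hgmeas.aemeasurable (ENNReal.ofReal (2 * ξ))
  calc μ {E : ℝ | ξ ≤ |(∫ x, Real.log ‖(E : ℂ) + ε * Complex.I - (x : ℂ)‖ ∂ρ)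
          - ∫ x, Real.log |E - x| ∂ρ|}
      ≤ μ {E : ℝ | ENNReal.ofReal (2 * ξ)
          ≤ ∫⁻ x, ENNReal.ofReal (Real.log (1 + ε ^ 2 / (E - x) ^ 2)) ∂ρ} := measure_mono key
    _ ≤ (⨆ E' : ℝ, ∫⁻ E, ENNReal.ofReal (Real.log (1 + ε ^ 2 / (E - E') ^ 2)) ∂μ)
        / ENNReal.ofReal (2 * ξ) := by
        rw [ENNReal.le_div_iff_mul_le (Or.inl hc0) (Or.inl hct)]
        calc μ {E : ℝ | ENNReal.ofReal (2 * ξ)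
              ≤ ∫⁻ x, ENNReal.ofReal (Real.log (1 + ε ^ 2 / (E - x) ^ 2)) ∂ρ}
              * ENNReal.ofReal (2 * ξ)
            = ENNReal.ofReal (2 * ξ) * μ {E : ℝ | ENNReal.ofReal (2 * ξ)
              ≤ ∫⁻ x, ENNReal.ofReal (Real.log (1 + ε ^ 2 / (E - x) ^ 2)) ∂ρ} := mul_comm _ _
          _ ≤ ∫⁻ E, ∫⁻ x, ENNReal.ofReal (Real.log (1 + ε ^ 2 / (E - x) ^ 2)) ∂ρ ∂μ := cheb
          _ ≤ ⨆ E' : ℝ, ∫⁻ E, ENNReal.ofReal (Real.log (1 + ε ^ 2 / (E - E') ^ 2)) ∂μ := tonelli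
    _ = ENNReal.ofReal (1 / (2 * ξ)) *
        ⨆ E' : ℝ, ∫⁻ E, ENNReal.ofReal (Real.log (1 + ε ^ 2 / (E - E') ^ 2)) ∂μ := by
        rw [ENNReal.div_eq_inv_mul, one_div, ENNReal.ofReal_inv_of_pos (by linarith)]
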